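/- Cauchy-type formula for the equivariant Grothendieck polynomials: for every integer ℓ ≥ 1 one has Σ_{a,b ≥ 0, a+b = ℓ} (-1)^a G'_a(z,ζ) e_b(z) = c'_{≥ℓ}(z,ζ) in ℤ[z_1,…,z_k, ζ_1,…,ζ_n]. -/

import Mathlib

open Finset MvPolynomial

noncomputable section

/-- The elementary symmetric polynomial `e_r` of a family of ring elements. -/
def esymmF {R : Type*} [CommRing R] {m : ℕ} (f : Fin m → R) (r : ℕ) : R :=
  ∑ t ∈ Finset.powersetCard r Finset.univ, ∏ j ∈ t, f j

/-- The complete homogeneous symmetric polynomial `h_r` of a family. -/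
def hsymmF {R : Type*} [CommRing R] {m : ℕ} (f : Fin m → R) (r : ℕ) : R :=
  ∑ μ : Sym (Fin m) r, (μ.1.map f).prod

/-- `e_r(z)`: elementary symmetric polynomial in the variables `z_1,…,z_k`
inside `ℤ[z_1,…,z_k, ζ_1,…,ζ_n]`. -/
def eZ (k n : ℕ) (r : ℕ) : MvPolynomial (Fin k ⊕ Fin n) ℤ :=
  esymmF (fun i : Fin k => X (Sum.inl i)) r

/-- `e_r(ζ)`: elementary symmetric polynomial in the variables `ζ_1,…,ζ_n`. -/
def eZeta (k n : ℕ) (r : ℕ) : MvPolynomial (Fin k ⊕ Fin n) ℤ :=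
  esymmF (fun j : Fin n => X (Sum.inr j)) r

/-- `h_r(z)`: complete homogeneous symmetric polynomial in `z_1,…,z_k`. -/
def hZ (k n : ℕ) (r : ℕ) : MvPolynomial (Fin k ⊕ Fin n) ℤ :=
  hsymmF (fun i : Fin k => X (Sum.inl i)) r

/-- The single-row Grothendieck polynomial
`G_j(z) = Σ_{a,b ≥ 0, a+b ≤ k} (-1)^b h_{j+a}(z) e_b(z)`. -/
def GZ (k n : ℕ) (j : ℕ) : MvPolynomial (Fin k ⊕ Fin n) ℤ :=
  ∑ a ∈ Finset.range (k + 1), ∑ b ∈ Finset.range (k + 1 - a),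
    (-1) ^ b * hZ k n (j + a) * eZ k n b

/-- The equivariant complete homogeneous polynomial
`h'_j(z,ζ) = Σ_{a+b=j} (-1)^a e_a(ζ) h_b(z)`. -/
def hPrime (k n : ℕ) (j : ℕ) : MvPolynomial (Fin k ⊕ Fin n) ℤ :=
  ∑ p ∈ Finset.HasAntidiagonal.antidiagonal j, (-1) ^ p.1 * eZeta k n p.1 * hZ k n p.2

/-- The equivariant Grothendieck polynomial
`G'_j(z,ζ) = Σ_{a+b=j} (-1)^a e_a(ζ) G_b(z)`. -/
def GPrime (k n : ℕ) (j : ℕ) : MvPolynomial (Fin k ⊕ Fin n) ℤ :=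
  ∑ p ∈ Finset.HasAntidiagonal.antidiagonal j, (-1) ^ p.1 * eZeta k n p.1 * GZ k n p.2

/-- The truncation `c^z_{≥j} = Σ_{i=j}^{k} (-1)^{i-j} e_i(z)`. -/
def cGeZ (k n : ℕ) (j : ℕ) : MvPolynomial (Fin k ⊕ Fin n) ℤ :=
  ∑ i ∈ Finset.Icc j k, (-1) ^ (i - j) * eZ k n i

/-- `c'_{≥ℓ}(z,ζ) = e_ℓ(ζ) + Σ_{m=1}^{k-1} e_{ℓ-m}(ζ) c^z_{≥ m+1}`,
with the convention `e_s(ζ) = 0` for `s < 0` (i.e. for `m > ℓ`). -/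
def cPrimeGe (k n : ℕ) (ℓ : ℕ) : MvPolynomial (Fin k ⊕ Fin n) ℤ :=
  eZeta k n ℓ + ∑ m ∈ Finset.Icc 1 (k - 1),
    (if m ≤ ℓ then eZeta k n (ℓ - m) * cGeZ k n (m + 1) else 0)

/- AUX -/
namespace CauchyAux

variable {R : Type*} [CommRing R]

def esymmG (α : Type) [Fintype α] (f : α → R) (r : ℕ) : R :=
  ∑ t ∈ Finset.powersetCard r Finset.univ, ∏ j ∈ t, f j

def hsymmG (α : Type) [Fintype α] [DecidableEq α] (f : α → R) (r : ℕ) : R :=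
  ∑ μ : Sym α r, (μ.1.map f).prod

lemma esymmG_zero (α : Type) [Fintype α] (f : α → R) : esymmG α f 0 = 1 := by
  simp [esymmG]

lemma hsymmG_zero (α : Type) [Fintype α] [DecidableEq α] (f : α → R) : hsymmG α f 0 = 1 := by
  simp [hsymmG, Sym.eq_nil_of_card_zero]

lemma esymmG_eq (α : Type) [Fintype α] (f : α → R) (r : ℕ) :
    esymmG α f r = ((Finset.univ : Finset α).val.map f).esymm r :=
  (Finset.esymm_map_val f Finset.univ r).symm

lemma univ_option_val (α : Type) [Fintype α] (f : Option α → R) :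
    ((Finset.univ : Finset (Option α)).val.map f)
      = f none ::ₘ ((Finset.univ : Finset α).val.map (f ∘ some)) := by
  rw [univ_option]
  show ((Finset.cons none (Finset.univ.map Function.Embedding.some) (by simp)).val.map f) = _
  simp [Multiset.map_map, Function.comp_def]

lemma esymm_cons (a : R) (s : Multiset R) (j : ℕ) :
    (a ::ₘ s).esymm (j+1) = s.esymm (j+1) + a * s.esymm j := by
  simp [Multiset.esymm, Multiset.powersetCard_cons, Multiset.map_map, Function.comp,
    Multiset.sum_map_mul_left]

lemma esymmG_option (α : Type) [Fintype α] (f : Option α → R) (j : ℕ) :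
    esymmG (Option α) f (j+1)
      = esymmG α (f ∘ some) (j+1) + f none * esymmG α (f ∘ some) j := by
  rw [esymmG_eq, esymmG_eq, esymmG_eq, univ_option_val, esymm_cons]

lemma hsymmG_option (α : Type) [Fintype α] [DecidableEq α] (f : Option α → R) (r : ℕ) :
    hsymmG (Option α) f (r+1)
      = hsymmG α (f ∘ some) (r+1) + f none * hsymmG (Option α) f r := by
  classical
  unfold hsymmG
  rw [← Equiv.sum_comp (symOptionSuccEquiv (α := α) (n := r)).symm
    (fun μ : Sym (Option α) (r+1) => (μ.1.map f).prod), Fintype.sum_sum_type]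
  have h1 : ∀ s : Sym (Option α) r,
      (symOptionSuccEquiv.symm (Sum.inl s)) = none ::ₛ s := fun s => rfl
  have h2 : ∀ s : Sym α (r+1),
      (symOptionSuccEquiv.symm (Sum.inr s)) = s.map Function.Embedding.some := fun s => rfl
  simp only [h1, h2]
  rw [add_comm]
  congr 1
  · apply Finset.sum_congr rfl
    intro s _
    show ((s.1.map Function.Embedding.some).map f).prod = (s.1.map (f ∘ some)).prod
    rw [Multiset.map_map]
    rfl
  · rw [Finset.mul_sum]
    apply Finset.sum_congr rfl
    intro s _
    show ((none ::ₘ s.1).map f).prod = f none * (s.1.map f).prod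
    rw [Multiset.map_cons, Multiset.prod_cons]

lemma esymmG_pempty (I : Fintype PEmpty.{1}) (f : PEmpty.{1} → R) (r : ℕ) :
    @esymmG R _ PEmpty.{1} I f (r+1) = 0 := by
  rw [esymmG, Finset.univ_eq_empty, Finset.powersetCard_eq_empty.mpr (by simp),
    Finset.sum_empty]

lemma hsymmG_pempty (I : Fintype PEmpty.{1}) (D : DecidableEq PEmpty.{1})
    (f : PEmpty.{1} → R) (r : ℕ) : @hsymmG R _ PEmpty.{1} I D f (r+1) = 0 := by
  haveI : IsEmpty (Sym PEmpty.{1} (r+1)) := by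
    constructor
    intro μ
    have h0 : μ.1 = 0 := Multiset.eq_zero_of_forall_notMem (fun x _ => x.elim)
    have := μ.2
    rw [h0] at this
    simp at this
  rw [hsymmG, Finset.univ_eq_empty, Finset.sum_empty]

lemma esymmG_comp_equiv {α β : Type} [Fintype α] [Fintype β] (e : α ≃ β) (f : β → R) (r : ℕ) :
    esymmG α (f ∘ e) r = esymmG β f r := by
  rw [esymmG_eq, esymmG_eq]
  congr 1
  rw [← Finset.map_univ_equiv e, Finset.map_val, Multiset.map_map]
  rfl

lemma hsymmG_comp_equiv {α β : Type} [Fintype α] [Fintype β] [DecidableEq α] [DecidableEq β]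
    (e : α ≃ β) (f : β → R) (r : ℕ) :
    hsymmG α (f ∘ e) r = hsymmG β f r := by
  apply Fintype.sum_equiv (Sym.equivCongr e)
  intro μ
  show (μ.1.map (f ∘ e)).prod = ((μ.1.map e).map f).prod
  rw [Multiset.map_map]


def KK (α : Type) [Fintype α] [DecidableEq α] (f : α → R) (r : ℕ) : R :=
  ∑ p ∈ Finset.HasAntidiagonal.antidiagonal r, (-1 : R) ^ p.1 * hsymmG α f p.1 * esymmG α f p.2

lemma KK_option (α : Type) [Fintype α] [DecidableEq α] (f : Option α → R) (r : ℕ) :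
    KK (Option α) f (r+1) = KK α (f ∘ some) (r+1) := by
  classical
  set g : α → R := f ∘ some with hg
  set x : R := f none with hx
  -- mixed sum
  set MM : ℕ → R := fun m => ∑ p ∈ Finset.HasAntidiagonal.antidiagonal m,
    (-1 : R) ^ p.1 * hsymmG (Option α) f p.1 * esymmG α g p.2 with hMM
  have claim1 : ∀ m : ℕ, KK (Option α) f (m+1) = MM (m+1) + x * MM m := by
    intro m
    rw [KK, Finset.Nat.sum_antidiagonal_succ'
      (f := fun p => (-1 : R) ^ p.1 * hsymmG (Option α) f p.1 * esymmG (Option α) f p.2)]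
    dsimp only
    have expand : ∀ p : ℕ × ℕ,
        (-1 : R) ^ p.1 * hsymmG (Option α) f p.1 * esymmG (Option α) f (p.2+1)
        = (-1 : R) ^ p.1 * hsymmG (Option α) f p.1 * esymmG α g (p.2+1)
          + x * ((-1 : R) ^ p.1 * hsymmG (Option α) f p.1 * esymmG α g p.2) := by
      intro p
      rw [esymmG_option]
      ring
    rw [Finset.sum_congr rfl (fun p _ => expand p), Finset.sum_add_distrib, ← Finset.mul_sum]
    have hM1 : MM (m+1) = (-1 : R) ^ (m+1) * hsymmG (Option α) f (m+1) * esymmG (Option α) f 0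
        + ∑ p ∈ Finset.HasAntidiagonal.antidiagonal m,
          (-1 : R) ^ p.1 * hsymmG (Option α) f p.1 * esymmG α g (p.2+1) := by
      simp only [hMM]
      rw [Finset.Nat.sum_antidiagonal_succ'
        (f := fun p => (-1 : R) ^ p.1 * hsymmG (Option α) f p.1 * esymmG α g p.2)]
      dsimp only
      rw [esymmG_zero, esymmG_zero]
    rw [hM1]
    ring
  have claim2 : ∀ m : ℕ, MM (m+1) = KK α g (m+1) - x * MM m := by
    intro m
    simp only [hMM]
    rw [Finset.Nat.sum_antidiagonal_succ
      (f := fun p => (-1 : R) ^ p.1 * hsymmG (Option α) f p.1 * esymmG α g p.2)]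
    dsimp only
    have expand : ∀ p : ℕ × ℕ,
        (-1 : R) ^ (p.1+1) * hsymmG (Option α) f (p.1+1) * esymmG α g p.2
        = (-1 : R) ^ (p.1+1) * hsymmG α g (p.1+1) * esymmG α g p.2
          - x * ((-1 : R) ^ p.1 * hsymmG (Option α) f p.1 * esymmG α g p.2) := by
      intro p
      rw [hsymmG_option]
      rw [pow_succ]
      ring
    rw [Finset.sum_congr rfl (fun p _ => expand p), Finset.sum_sub_distrib, ← Finset.mul_sum]
    have hK1 : KK α g (m+1) = (-1 : R) ^ (0:ℕ) * hsymmG α g 0 * esymmG α g (m+1)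
        + ∑ p ∈ Finset.HasAntidiagonal.antidiagonal m,
          (-1 : R) ^ (p.1+1) * hsymmG α g (p.1+1) * esymmG α g p.2 := by
      rw [KK]
      rw [Finset.Nat.sum_antidiagonal_succ
        (f := fun p => (-1 : R) ^ p.1 * hsymmG α g p.1 * esymmG α g p.2)]
      try dsimp only
    rw [hK1, hsymmG_zero, hsymmG_zero]
    ring
  rw [claim1 r, claim2 r]
  ring

lemma KK_congr (α : Type) (I I' : Fintype α) (D D' : DecidableEq α) (f : α → R) (r : ℕ) :
    @KK R _ α I D f r = @KK R _ α I' D' f r := by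
  cases Subsingleton.elim I I'
  cases Subsingleton.elim D D'
  rfl

lemma KK_eq_zero (α : Type) [Fintype α] [DecidableEq α] (f : α → R) (r : ℕ) (hr : 1 ≤ r) :
    KK α f r = 0 := by
  have main : ∀ (I : Fintype α) (D : DecidableEq α) (f : α → R) (r : ℕ), 1 ≤ r →
      @KK R _ α I D f r = 0 := by
    refine Fintype.induction_empty_option
      (P := fun γ _ => ∀ (I : Fintype γ) (D : DecidableEq γ) (f : γ → R) (r : ℕ), 1 ≤ r →
        @KK R _ γ I D f r = 0) ?_ ?_ ?_ α
    · intro α' β' hβ' e ih I D f r hr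
      have : @KK R _ β' I D f r
          = @KK R _ α' (Fintype.ofEquiv β' e.symm) (Classical.decEq α') (f ∘ e) r := by
        rw [KK, KK]
        apply Finset.sum_congr rfl
        intro p _
        rw [@esymmG_comp_equiv R _ α' β' (Fintype.ofEquiv β' e.symm) I e f p.2,
          @hsymmG_comp_equiv R _ α' β' (Fintype.ofEquiv β' e.symm) I
            (Classical.decEq α') D e f p.1]
      rw [this]
      exact ih _ _ _ r hr
    · intro I D f r hr
      obtain ⟨r, rfl⟩ : ∃ r', r = r' + 1 := ⟨r - 1, by omega⟩
      rw [KK]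
      apply Finset.sum_eq_zero
      rintro ⟨p1, p2⟩ hp
      have hsum : p1 + p2 = r + 1 := Finset.HasAntidiagonal.mem_antidiagonal.mp hp
      cases p1 with
      | zero =>
        obtain ⟨q, rfl⟩ : ∃ q, p2 = q + 1 := ⟨r, by omega⟩
        rw [esymmG_pempty I f q]
        ring
      | succ p1' =>
        rw [hsymmG_pempty I D f p1']
        ring
    · intro α' hα' ih I D f r hr
      letI Dα : DecidableEq α' := Classical.decEq α'
      obtain ⟨r, rfl⟩ : ∃ r', r = r' + 1 := ⟨r - 1, by omega⟩
      have step := KK_option (α := α') (f := f) (r := r)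
      rw [KK_congr _ I (@instFintypeOption α' hα') D (fun a b => Option.instDecidableEq a b)]
      rw [step]
      exact ih _ _ _ (r+1) (by omega)
  exact main _ _ f r hr

end CauchyAux

section PolyPart
open CauchyAux

variable (k n : ℕ)

local notation "Poly" => MvPolynomial (Fin k ⊕ Fin n) ℤ

lemma hZ_zero : hZ k n 0 = 1 := hsymmG_zero (Fin k) (fun i => X (Sum.inl i))

lemma eZ_zero : eZ k n 0 = 1 := esymmG_zero (Fin k) (fun i => X (Sum.inl i))

lemma eZ_eq_zero (b : ℕ) (hb : k < b) : eZ k n b = 0 := by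
  show esymmG (Fin k) (fun i => X (Sum.inl i)) b = 0
  rw [esymmG, Finset.powersetCard_eq_empty.mpr (by simpa using hb), Finset.sum_empty]

lemma key1 (r : ℕ) (hr : 1 ≤ r) :
    ∑ p ∈ Finset.HasAntidiagonal.antidiagonal r, (-1 : Poly) ^ p.1 * hZ k n p.1 * eZ k n p.2 = 0 :=
  KK_eq_zero (Fin k) (fun i => X (Sum.inl i)) r hr

lemma key2 (r : ℕ) (hr : 1 ≤ r) :
    ∑ p ∈ Finset.HasAntidiagonal.antidiagonal r, (-1 : Poly) ^ p.2 * hZ k n p.1 * eZ k n p.2 = 0 := by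
  have : ∑ p ∈ Finset.HasAntidiagonal.antidiagonal r, (-1 : Poly) ^ p.2 * hZ k n p.1 * eZ k n p.2
      = (-1 : Poly) ^ r * ∑ p ∈ Finset.HasAntidiagonal.antidiagonal r,
          (-1 : Poly) ^ p.1 * hZ k n p.1 * eZ k n p.2 := by
    rw [Finset.mul_sum]
    apply Finset.sum_congr rfl
    intro p hp
    have hpr : p.1 + p.2 = r := Finset.HasAntidiagonal.mem_antidiagonal.mp hp
    have : (-1 : Poly) ^ r * (-1 : Poly) ^ p.1 = (-1 : Poly) ^ p.2 := by
      rw [← hpr, pow_add]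
      have : (-1 : Poly) ^ p.1 * (-1 : Poly) ^ p.1 = 1 := by
        rw [← pow_add, ← two_mul, pow_mul]
        norm_num
      calc (-1 : Poly) ^ p.1 * (-1 : Poly) ^ p.2 * (-1 : Poly) ^ p.1
          = ((-1 : Poly) ^ p.1 * (-1 : Poly) ^ p.1) * (-1 : Poly) ^ p.2 := by ring
        _ = (-1 : Poly) ^ p.2 := by rw [this, one_mul]
    rw [← this]
    ring
  rw [this, key1 k n r hr, mul_zero]

/-- triangle sum regrouping -/
lemma sum_tri {M : Type*} [AddCommMonoid M] (N : ℕ) (F : ℕ → ℕ → M) :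
    ∑ a ∈ Finset.range (N+1), ∑ b ∈ Finset.range (N+1-a), F a b
      = ∑ r ∈ Finset.range (N+1), ∑ p ∈ Finset.HasAntidiagonal.antidiagonal r, F p.1 p.2 := by
  induction N with
  | zero => simp
  | succ N ih =>
    have hL : ∑ a ∈ Finset.range (N+1+1), ∑ b ∈ Finset.range (N+1+1-a), F a b
        = (∑ a ∈ Finset.range (N+1), ∑ b ∈ Finset.range (N+1-a), F a b)
          + ∑ a ∈ Finset.range (N+1+1), F a (N+1-a) := by
      rw [Finset.sum_range_succ]
      have : ∀ a ∈ Finset.range (N+1),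
          ∑ b ∈ Finset.range (N+1+1-a), F a b
            = (∑ b ∈ Finset.range (N+1-a), F a b) + F a (N+1-a) := by
        intro a ha
        have ha' : a ≤ N := by simpa [Nat.lt_succ_iff] using ha
        have h2 : N+1+1-a = (N+1-a)+1 := by omega
        rw [h2, Finset.sum_range_succ]
      rw [Finset.sum_congr rfl this, Finset.sum_add_distrib, Finset.sum_range_succ (n := N+1)]
      have h3 : N+1+1-(N+1) = 1 := by omega
      rw [h3, Finset.sum_range_one]
      have h4 : N+1-(N+1) = 0 := by omega
      rw [h4]
      abel
    rw [hL, ih]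
    conv_rhs => rw [Finset.sum_range_succ]
    rw [Finset.Nat.sum_antidiagonal_eq_sum_range_succ F (N+1)]

/-- `U_a(m) = Σ_{q∈antidiag m} (-1)^{q.1} h_{q.1+a} e_{q.2}` -/
def UU (a m : ℕ) : Poly :=
  ∑ q ∈ Finset.HasAntidiagonal.antidiagonal m, (-1 : Poly) ^ q.1 * hZ k n (q.1 + a) * eZ k n q.2

lemma UU_zero (m : ℕ) (hm : 1 ≤ m) : UU k n 0 m = 0 := by
  have : UU k n 0 m
      = ∑ p ∈ Finset.HasAntidiagonal.antidiagonal m, (-1 : Poly) ^ p.1 * hZ k n p.1 * eZ k n p.2 := by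
    rw [UU]
    apply Finset.sum_congr rfl
    intro p _
    rw [Nat.add_zero]
  rw [this, key1 k n m hm]

lemma UU_succ (a m : ℕ) : UU k n (a+1) m = hZ k n a * eZ k n (m+1) - UU k n a (m+1) := by
  have h := Finset.Nat.sum_antidiagonal_succ
    (f := fun q => (-1 : Poly) ^ q.1 * hZ k n (q.1 + a) * eZ k n q.2) (n := m)
  have h2 : UU k n a (m+1) = hZ k n a * eZ k n (m+1) - UU k n (a+1) m := by
    rw [UU, h]
    dsimp only
    rw [pow_zero, zero_add, one_mul]
    have : ∀ q ∈ Finset.HasAntidiagonal.antidiagonal m,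
        (-1 : Poly) ^ (q.1+1) * hZ k n (q.1 + 1 + a) * eZ k n q.2
          = -((-1 : Poly) ^ q.1 * hZ k n (q.1 + (a+1)) * eZ k n q.2) := by
      intro q _
      rw [pow_succ]
      have : q.1 + 1 + a = q.1 + (a + 1) := by omega
      rw [this]
      ring
    rw [Finset.sum_congr rfl this, Finset.sum_neg_distrib]
    rw [UU]
    ring
  rw [h2]
  ring

/-- `D_N(m) = Σ_{p∈antidiag N} (-1)^{p.2} e_{p.2} U_{p.1}(m)` -/
def DD (N m : ℕ) : Poly :=
  ∑ p ∈ Finset.HasAntidiagonal.antidiagonal N, (-1 : Poly) ^ p.2 * eZ k n p.2 * UU k n p.1 m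

lemma DD_zero (m : ℕ) (hm : 1 ≤ m) : DD k n 0 m = 0 := by
  rw [DD, Finset.Nat.antidiagonal_zero, Finset.sum_singleton]
  rw [UU_zero k n m hm]
  ring

lemma DD_succ (N m : ℕ) (hm : 1 ≤ m) :
    DD k n (N+1) m = (if N = 0 then eZ k n (m+1) else 0) - DD k n N (m+1) := by
  rw [DD, Finset.Nat.sum_antidiagonal_succ
    (f := fun p => (-1 : Poly) ^ p.2 * eZ k n p.2 * UU k n p.1 m)]
  dsimp only
  rw [UU_zero k n m hm, mul_zero]
  have : ∀ p ∈ Finset.HasAntidiagonal.antidiagonal N,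
      (-1 : Poly) ^ p.2 * eZ k n p.2 * UU k n (p.1+1) m
        = eZ k n (m+1) * ((-1 : Poly) ^ p.2 * hZ k n p.1 * eZ k n p.2)
          - (-1 : Poly) ^ p.2 * eZ k n p.2 * UU k n p.1 (m+1) := by
    intro p _
    rw [UU_succ]
    ring
  rw [Finset.sum_congr rfl this, Finset.sum_sub_distrib, ← Finset.mul_sum]
  rw [show (DD k n N (m+1)) = ∑ p ∈ Finset.HasAntidiagonal.antidiagonal N,
    (-1 : Poly) ^ p.2 * eZ k n p.2 * UU k n p.1 (m+1) from rfl]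
  rcases Nat.eq_zero_or_pos N with hN | hN
  · subst hN
    rw [if_pos rfl]
    rw [Finset.Nat.antidiagonal_zero, Finset.sum_singleton]
    dsimp only
    rw [pow_zero, hZ_zero, eZ_zero]
    ring
  · rw [if_neg (show ¬ N = 0 by omega), key2 k n N hN, mul_zero]
    ring

lemma DD_val : ∀ N m : ℕ, 1 ≤ m →
    DD k n N m = if N = 0 then 0 else (-1 : Poly) ^ (N+1) * eZ k n (m+N) := by
  intro N
  induction N with
  | zero => intro m hm; rw [if_pos rfl]; exact DD_zero k n m hm
  | succ N ih =>
    intro m hm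
    rw [DD_succ k n N m hm, ih (m+1) (by omega),
      if_neg (show ¬ N + 1 = 0 by omega)]
    rcases Nat.eq_zero_or_pos N with hN | hN
    · subst hN
      rw [if_pos rfl, if_pos rfl, sub_zero]
      norm_num
    · simp only [if_neg (show ¬ N = 0 by omega)]
      have : m + 1 + N = m + (N+1) := by omega
      rw [this, zero_sub, pow_succ]
      ring

lemma GZ_expand (d : ℕ) : GZ k n d
    = ∑ r ∈ Finset.range (k+1), ∑ p ∈ Finset.HasAntidiagonal.antidiagonal r,
        (-1 : Poly) ^ p.2 * hZ k n (d + p.1) * eZ k n p.2 := by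
  rw [GZ, ← sum_tri k (fun a b => (-1 : Poly) ^ b * hZ k n (d + a) * eZ k n b)]

lemma GZ_zero : GZ k n 0 = 1 := by
  rw [GZ_expand]
  rw [Finset.sum_eq_single_of_mem 0 (Finset.mem_range.mpr (by omega))]
  · rw [Finset.Nat.antidiagonal_zero, Finset.sum_singleton]
    dsimp only
    rw [pow_zero, Nat.add_zero, hZ_zero, eZ_zero]
    ring
  · intro r _ hr
    have h1 : 1 ≤ r := by omega
    have : ∑ p ∈ Finset.HasAntidiagonal.antidiagonal r, (-1 : Poly) ^ p.2 * hZ k n (0 + p.1) * eZ k n p.2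
        = ∑ p ∈ Finset.HasAntidiagonal.antidiagonal r, (-1 : Poly) ^ p.2 * hZ k n p.1 * eZ k n p.2 := by
      apply Finset.sum_congr rfl
      intro p _
      rw [Nat.zero_add]
    rw [this, key2 k n r h1]

/-- `B_m = Σ_{q∈antidiag m} (-1)^{q.1} G_{q.1} e_{q.2}` -/
def BB (m : ℕ) : Poly :=
  ∑ q ∈ Finset.HasAntidiagonal.antidiagonal m, (-1 : Poly) ^ q.1 * GZ k n q.1 * eZ k n q.2

lemma BB_zero : BB k n 0 = 1 := by
  rw [BB, Finset.Nat.antidiagonal_zero, Finset.sum_singleton]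
  dsimp only
  rw [pow_zero, GZ_zero, eZ_zero]
  ring

lemma BB_val (m : ℕ) (hm : 1 ≤ m) :
    BB k n m = ∑ j ∈ Finset.range k, (-1 : Poly) ^ j * eZ k n (m+1+j) := by
  have step1 : BB k n m = ∑ r ∈ Finset.range (k+1), DD k n r m := by
    rw [BB]
    have expand : ∀ q ∈ Finset.HasAntidiagonal.antidiagonal m,
        (-1 : Poly) ^ q.1 * GZ k n q.1 * eZ k n q.2
          = ∑ r ∈ Finset.range (k+1), ∑ p ∈ Finset.HasAntidiagonal.antidiagonal r,
              (-1 : Poly) ^ p.2 * eZ k n p.2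
                * ((-1 : Poly) ^ q.1 * hZ k n (q.1 + p.1) * eZ k n q.2) := by
      intro q _
      rw [GZ_expand k n q.1, mul_comm ((-1 : Poly) ^ q.1), mul_assoc, Finset.sum_mul]
      apply Finset.sum_congr rfl
      intro r _
      rw [Finset.sum_mul]
      apply Finset.sum_congr rfl
      intro p _
      ring
    rw [Finset.sum_congr rfl expand, Finset.sum_comm]
    apply Finset.sum_congr rfl
    intro r _
    rw [Finset.sum_comm]
    apply Finset.sum_congr rfl
    intro p _
    rw [← Finset.mul_sum]
    rfl
  rw [step1]
  have : ∀ r ∈ Finset.range (k+1), DD k n r m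
      = if r = 0 then 0 else (-1 : Poly) ^ (r+1) * eZ k n (m+r) :=
    fun r _ => DD_val k n r m hm
  rw [Finset.sum_congr rfl this, Finset.sum_range_succ']
  rw [if_pos rfl, add_zero]
  apply Finset.sum_congr rfl
  intro j _
  rw [if_neg (Nat.succ_ne_zero j)]
  have h1 : m + (j+1) = m+1+j := by omega
  have h2 : (-1 : Poly) ^ (j+1+1) = (-1 : Poly) ^ j := by
    rw [pow_succ, pow_succ]
    ring
  rw [h1, h2]

lemma cval (m : ℕ) :
    ∑ j ∈ Finset.range k, (-1 : Poly) ^ j * eZ k n (m+1+j) = cGeZ k n (m+1) := by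
  rw [cGeZ, ← Finset.Ico_add_one_right_eq_Icc, Finset.sum_Ico_eq_sum_range]
  have hsub : ∀ j, (m+1+j) - (m+1) = j := by intro j; omega
  have congr1 : ∀ j ∈ Finset.range (k+1-(m+1)),
      (-1 : Poly) ^ ((m+1+j) - (m+1)) * eZ k n (m+1+j)
        = (-1 : Poly) ^ j * eZ k n (m+1+j) := by
    intro j _
    rw [hsub j]
  rw [Finset.sum_congr rfl congr1]
  symm
  apply Finset.sum_subset
  · intro j hj
    rw [Finset.mem_range] at *
    omega
  · intro j hj hj2
    rw [Finset.mem_range] at hj hj2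
    rw [eZ_eq_zero k n (m+1+j) (by omega), mul_zero]

lemma neg_one_trick {A : Type*} [CommRing A] (a b : ℕ) :
    (-1 : A) ^ (a + b) * (-1 : A) ^ a = (-1 : A) ^ b := by
  rw [pow_add]
  have h : (-1 : A) ^ a * (-1 : A) ^ a = 1 := by
    rw [← pow_add, ← two_mul, pow_mul]
    norm_num
  calc (-1 : A) ^ a * (-1 : A) ^ b * (-1 : A) ^ a
      = ((-1 : A) ^ a * (-1 : A) ^ a) * (-1 : A) ^ b := by ring
    _ = (-1 : A) ^ b := by rw [h, one_mul]

lemma cGeZ_eq_zero (j : ℕ) (hj : k < j) : cGeZ k n j = 0 := by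
  rw [cGeZ, Finset.Icc_eq_empty (by omega), Finset.sum_empty]

end PolyPart

/-- Cauchy-type formula for the equivariant Grothendieck polynomials:
for `ℓ ≥ 1`, `Σ_{a+b=ℓ} (-1)^a G'_a(z,ζ) e_b(z) = c'_{≥ℓ}(z,ζ)`. -/
theorem cauchy_GPrime (k n : ℕ) (hk : 1 ≤ k) (hn : 1 ≤ n) (ℓ : ℕ) (hℓ : 1 ≤ ℓ) :
    ∑ p ∈ Finset.HasAntidiagonal.antidiagonal ℓ, (-1) ^ p.1 * GPrime k n p.1 * eZ k n p.2
      = cPrimeGe k n ℓ := by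
  classical
  have key : (PowerSeries.mk (fun a => (-1 : MvPolynomial (Fin k ⊕ Fin n) ℤ) ^ a * GPrime k n a))
      = PowerSeries.mk (fun c => eZeta k n c)
        * PowerSeries.mk (fun d => (-1 : MvPolynomial (Fin k ⊕ Fin n) ℤ) ^ d * GZ k n d) := by
    ext d : 1
    rw [PowerSeries.coeff_mul, PowerSeries.coeff_mk]
    simp only [PowerSeries.coeff_mk]
    rw [GPrime, Finset.mul_sum]
    symm
    apply Finset.sum_congr rfl
    intro p hp
    have hd : p.1 + p.2 = d := Finset.HasAntidiagonal.mem_antidiagonal.mp hp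
    have htr := neg_one_trick (A := MvPolynomial (Fin k ⊕ Fin n) ℤ) p.1 p.2
    rw [← hd, ← htr]
    ring
  have keyB : ∀ m : ℕ, (PowerSeries.coeff m)
      ((PowerSeries.mk fun d => (-1 : MvPolynomial (Fin k ⊕ Fin n) ℤ) ^ d * GZ k n d)
        * PowerSeries.mk (fun b => eZ k n b)) = BB k n m := by
    intro m
    rw [PowerSeries.coeff_mul, BB]
    apply Finset.sum_congr rfl
    intro p _
    simp only [PowerSeries.coeff_mk]
  have main : ∑ p ∈ Finset.HasAntidiagonal.antidiagonal ℓ,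
        (-1 : MvPolynomial (Fin k ⊕ Fin n) ℤ) ^ p.1 * GPrime k n p.1 * eZ k n p.2
      = ∑ p ∈ Finset.HasAntidiagonal.antidiagonal ℓ, eZeta k n p.1 * BB k n p.2 := by
    have h1 : ∑ p ∈ Finset.HasAntidiagonal.antidiagonal ℓ,
          (-1 : MvPolynomial (Fin k ⊕ Fin n) ℤ) ^ p.1 * GPrime k n p.1 * eZ k n p.2
        = (PowerSeries.coeff ℓ)
            ((PowerSeries.mk fun a => (-1 : MvPolynomial (Fin k ⊕ Fin n) ℤ) ^ a * GPrime k n a)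
              * PowerSeries.mk (fun b => eZ k n b)) := by
      rw [PowerSeries.coeff_mul]
      apply Finset.sum_congr rfl
      intro p _
      simp only [PowerSeries.coeff_mk]
    rw [h1, key, mul_assoc, PowerSeries.coeff_mul]
    apply Finset.sum_congr rfl
    intro p _
    rw [PowerSeries.coeff_mk, keyB p.2]
  rw [main]
  obtain ⟨l, rfl⟩ : ∃ l, ℓ = l + 1 := ⟨ℓ - 1, by omega⟩
  rw [Finset.Nat.sum_antidiagonal_succ' (f := fun p => eZeta k n p.1 * BB k n p.2)]
  dsimp only
  rw [BB_zero, mul_one]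
  have hBB : ∀ p ∈ Finset.HasAntidiagonal.antidiagonal l,
      eZeta k n p.1 * BB k n (p.2+1) = eZeta k n p.1 * cGeZ k n (p.2+2) := by
    intro p _
    rw [BB_val k n (p.2+1) (by omega), cval k n (p.2+1)]
  rw [Finset.sum_congr rfl hBB]
  have swap : ∑ p ∈ Finset.HasAntidiagonal.antidiagonal l, eZeta k n p.1 * cGeZ k n (p.2+2)
      = ∑ i ∈ Finset.range (l+1), eZeta k n i * cGeZ k n ((l-i)+2) :=
    Finset.Nat.sum_antidiagonal_eq_sum_range_succ (fun a b => eZeta k n a * cGeZ k n (b+2)) l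
  have refl : ∑ i ∈ Finset.range (l+1), eZeta k n i * cGeZ k n ((l-i)+2)
      = ∑ i ∈ Finset.range (l+1), eZeta k n (l-i) * cGeZ k n (i+2) := by
    rw [← Finset.sum_range_reflect (fun i => eZeta k n i * cGeZ k n ((l-i)+2)) (l+1)]
    apply Finset.sum_congr rfl
    intro i hi
    have hil : i < l + 1 := Finset.mem_range.mp hi
    have e1 : l + 1 - 1 - i = l - i := by omega
    have e2 : l - (l - i) = i := by omega
    rw [e1, e2]
  have Tform : ∑ m ∈ Finset.Icc 1 (l+1), eZeta k n (l+1-m) * cGeZ k n (m+1)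
      = ∑ i ∈ Finset.range (l+1), eZeta k n (l-i) * cGeZ k n (i+2) := by
    rw [← Finset.Ico_add_one_right_eq_Icc, Finset.sum_Ico_eq_sum_range]
    have e0 : l + 1 + 1 - 1 = l + 1 := by omega
    rw [e0]
    apply Finset.sum_congr rfl
    intro i hi
    have e1 : l + 1 - (1 + i) = l - i := by omega
    have e2 : 1 + i + 1 = i + 2 := by omega
    rw [e1, e2]
  rw [swap, refl, ← Tform, cPrimeGe]
  congr 1
  have filt : (Finset.Icc 1 (k-1)).filter (fun m => m ≤ l+1)
      = Finset.Icc 1 (min (l+1) (k-1)) := by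
    ext m
    simp only [Finset.mem_filter, Finset.mem_Icc, Finset.mem_Icc, le_min_iff]
    omega
  have right : ∑ m ∈ Finset.Icc 1 (k-1),
        (if m ≤ l+1 then eZeta k n (l+1-m) * cGeZ k n (m+1) else 0)
      = ∑ m ∈ Finset.Icc 1 (min (l+1) (k-1)), eZeta k n (l+1-m) * cGeZ k n (m+1) := by
    rw [← Finset.sum_filter, filt]
  have left : ∑ m ∈ Finset.Icc 1 (l+1), eZeta k n (l+1-m) * cGeZ k n (m+1)
      = ∑ m ∈ Finset.Icc 1 (min (l+1) (k-1)), eZeta k n (l+1-m) * cGeZ k n (m+1) := by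
    symm
    apply Finset.sum_subset
    · intro m hm
      simp only [Finset.mem_Icc, le_min_iff] at hm ⊢
      omega
    · intro m hm hm2
      simp only [Finset.mem_Icc, le_min_iff] at hm hm2
      rw [cGeZ_eq_zero k n (m+1) (by omega), mul_zero]
  rw [left, right]

end
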